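/- Let A = {a_0, …, a_{N−1}} be a finite subset of ℤ, spectral with spectrum Γ with 0 ∈ Γ, and suppose the local translation matrix B associated to Γ (with respect to this enumeration of A and some enumeration of Γ) is the N×N cyclic permutation matrix with ones in positions (i, i+1) for i = 0, …, N−2 and in position (N−1, 0), and zeros elsewhere. Then A tiles ℤ by Nℤ; that is, the sets A + t, t ∈ Nℤ, form a partition of ℤ, equivalently A is a complete set of residues modulo N. -/

import Mathlib

open Complex Real Matrix

noncomputable section

/-- The enumerations `a : Fin N → ℤ` and `l : Fin N → ℝ` list a finite set `A ⊂ ℤ` together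
with a spectrum `Γ ⊂ ℝ` for it: both are injective and
`Σ_{i} e^{2πi(a_j−a_k)λ_i} = N·δ_{jk}`. -/
def IsSpectrumPair (N : ℕ) (a : Fin N → ℤ) (l : Fin N → ℝ) : Prop :=
  Function.Injective a ∧ Function.Injective l ∧
  ∀ j k : Fin N,
    ∑ i : Fin N, Complex.exp (2 * Real.pi * Complex.I *
      (((a j : ℤ) : ℂ) - ((a k : ℤ) : ℂ)) * ((l i : ℝ) : ℂ)) =
    if j = k then (N : ℂ) else 0

/-- The Fourier matrix `F = (1/√N)(e^{−2πiλ_j a_k})_{j,k}`. -/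
def FmatFin (N : ℕ) (a : Fin N → ℤ) (l : Fin N → ℝ) : Matrix (Fin N) (Fin N) ℂ := fun j k =>
  (1 / Real.sqrt N : ℝ) *
    Complex.exp (-(2 * Real.pi * Complex.I) * ((l j : ℝ) : ℂ) * ((a k : ℤ) : ℂ))

/-- The diagonal matrix `D_Γ(t)` with entries `e^{2πiλ_j t}`. -/
def DmatFin (N : ℕ) (l : Fin N → ℝ) (t : ℝ) : Matrix (Fin N) (Fin N) ℂ :=
  Matrix.diagonal fun j => Complex.exp (2 * Real.pi * Complex.I * ((l j : ℝ) : ℂ) * (t : ℂ))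

/-- The group of local translations `U_Γ(t) = F* D_Γ(t) F`. -/
def UmatFin (N : ℕ) (a : Fin N → ℤ) (l : Fin N → ℝ) (t : ℝ) : Matrix (Fin N) (Fin N) ℂ :=
  (FmatFin N a l)ᴴ * DmatFin N l t * FmatFin N a l

/-- The local translation matrix `B = U_Γ(1) = F* D_Γ F`. -/
def BmatFin (N : ℕ) (a : Fin N → ℤ) (l : Fin N → ℝ) : Matrix (Fin N) (Fin N) ℂ :=
  UmatFin N a l 1

/-- if `A = {a_0, …, a_{N−1}}` is spectral with spectrum `Γ ∋ 0` and the
associated local translation matrix `B` is the cyclic permutation matrix (ones in positions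
`(i, i+1 mod N)`), then `A` tiles `ℤ` by `Nℤ`: the sets `A + t`, `t ∈ Nℤ`, partition `ℤ`,
equivalently `A` is a complete set of residues modulo `N`. -/
theorem cyclic_local_translation_matrix_implies_tiling (N : ℕ) (hN : 0 < N)
    (a : Fin N → ℤ) (l : Fin N → ℝ) (h : IsSpectrumPair N a l)
    (h0 : ∃ i, l i = 0)
    (hB : BmatFin N a l = fun i j : Fin N =>
      if (j : ℕ) = ((i : ℕ) + 1) % N then 1 else 0) :
    (∀ x : ℤ, ∃! p : Fin N × ℤ, x = a p.1 + N * p.2) ∧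
    (∀ z : ZMod N, ∃! k : Fin N, ((a k : ℤ) : ZMod N) = z) := by

  haveI : NeZero N := ⟨hN.ne'⟩
  obtain ⟨-, -, h3⟩ := h
  have hN' : (N : ℂ) ≠ 0 := Nat.cast_ne_zero.mpr hN.ne'
  -- Step 1: F is unitary
  have hFF : (FmatFin N a l)ᴴ * FmatFin N a l = 1 := by
    ext j k
    have hsq : ((1 / Real.sqrt N : ℝ) : ℂ) * ((1 / Real.sqrt N : ℝ) : ℂ) = (1 / N : ℂ) := by
      rw [← Complex.ofReal_mul, div_mul_div_comm, one_mul,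
        Real.mul_self_sqrt (Nat.cast_nonneg N)]
      push_cast; ring
    have key : ∀ i : Fin N,
        star (((1 / Real.sqrt N : ℝ) : ℂ) *
          Complex.exp (-(2 * Real.pi * Complex.I) * ((l i : ℝ) : ℂ) * ((a j : ℤ) : ℂ))) *
        (((1 / Real.sqrt N : ℝ) : ℂ) *
          Complex.exp (-(2 * Real.pi * Complex.I) * ((l i : ℝ) : ℂ) * ((a k : ℤ) : ℂ)))
        = (1 / N : ℂ) * Complex.exp (2 * Real.pi * Complex.I *
            (((a j : ℤ) : ℂ) - ((a k : ℤ) : ℂ)) * ((l i : ℝ) : ℂ)) := by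
      intro i
      rw [star_mul']; simp only [Complex.star_def]
      rw [← Complex.exp_conj, Complex.conj_ofReal]
      rw [mul_mul_mul_comm, hsq, ← Complex.exp_add]
      congr 1
      · simp only [_root_.map_mul, map_neg, Complex.conj_I, Complex.conj_ofReal, map_ofNat,
          map_intCast]
        ring
    simp only [Matrix.mul_apply, Matrix.conjTranspose_apply, FmatFin, Matrix.one_apply]
    rw [Finset.sum_congr rfl fun i _ => key i, ← Finset.mul_sum, h3 j k]
    rcases eq_or_ne j k with rfl | hjk
    · simp [hN']
    · simp [hjk]
  -- Step 2: every N * l j is an integer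
  have hint : ∀ j : Fin N, ∃ n : ℤ, (l j) * N = n := by
    intro j
    set F := FmatFin N a l with hF
    set D := DmatFin N l 1 with hD
    set C : Matrix (Fin N) (Fin N) ℂ :=
      (fun i j : Fin N => if (j : ℕ) = ((i : ℕ) + 1) % N then 1 else 0) with hC
    have hB' : Fᴴ * D * F = C := hB
    have hFFr : F * Fᴴ = 1 := mul_eq_one_comm.mp hFF
    have hDF : D * F = F * C := by
      rw [← hB', ← Matrix.mul_assoc, ← Matrix.mul_assoc, hFFr, Matrix.one_mul]
    set e := Complex.exp (2 * Real.pi * Complex.I * ((l j : ℝ) : ℂ) * (1 : ℂ)) with he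
    have hvalcast : ∀ m : Fin N, ((m : ℕ) + 1) % N = ((m + 1 : Fin N) : ℕ) := by
      intro m
      have h1 : ((m : ℕ) + 1) % N = ((m : ℕ) % N + 1 % N) % N := Nat.add_mod _ _ _
      rw [Nat.mod_eq_of_lt m.isLt] at h1
      rw [Fin.add_def, Fin.val_one']; exact h1
    have hrel : ∀ i : Fin N, e * F j (i + 1) = F j i := by
      intro i
      have hd : (D * F) j (i + 1) = e * F j (i + 1) := by
        simp [hD, DmatFin, Matrix.diagonal_mul, he]
      have hc : (F * C) j (i + 1) = F j i := by
        rw [Matrix.mul_apply, Finset.sum_eq_single i]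
        · rw [hC]; simp only
          rw [if_pos (hvalcast i).symm, mul_one]
        · intro m _ hm
          rw [hC]; simp only
          rw [if_neg, mul_zero]
          rw [hvalcast m]
          intro hcon
          exact hm (add_right_cancel (Fin.val_injective hcon).symm)
        · intro hi; exact absurd (Finset.mem_univ i) hi
      exact hd.symm.trans ((congrFun (congrFun hDF j) (i + 1)).trans hc)
    open Fin.NatCast in
    have hiter : ∀ n : ℕ, ∀ i : Fin N, e ^ n * F j (i + (n : Fin N)) = F j i := by
      intro n
      induction n with
      | zero => intro i; simp
      | succ n ih =>
        intro i
        have : (((n : ℕ) + 1 : ℕ) : Fin N) = (n : Fin N) + 1 := by push_cast; ring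
        rw [this, ← add_assoc, pow_succ, mul_assoc, hrel, ih]
    have hFne : F j 0 ≠ 0 := by
      rw [hF]
      simp only [FmatFin]
      apply mul_ne_zero _ (Complex.exp_ne_zero _)
      simp only [ne_eq, Complex.ofReal_eq_zero]
      positivity
    have heN : e ^ N = 1 := by
      have h0 := hiter N 0
      rw [Fin.natCast_self, add_zero] at h0
      exact mul_right_cancel₀ hFne (h0.trans (one_mul (F j 0)).symm)
    rw [he, ← Complex.exp_nat_mul, Complex.exp_eq_one_iff] at heN
    obtain ⟨n, hn⟩ := heN
    refine ⟨n, ?_⟩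
    have h2 : (2 * (Real.pi : ℂ) * Complex.I : ℂ) ≠ 0 := by
      simp [Complex.I_ne_zero, Real.pi_ne_zero]
    have hcx : ((l j : ℂ)) * (N : ℂ) = (n : ℂ) := by
      apply mul_left_cancel₀ h2
      linear_combination hn
    exact_mod_cast hcx
  -- Step 3: a is injective mod N
  have hinj : ∀ j k : Fin N, ((a j : ℤ) : ZMod N) = ((a k : ℤ) : ZMod N) → j = k := by
    intro j k hjk
    by_contra hne
    have hdvd : (N : ℤ) ∣ a j - a k :=
      ((ZMod.intCast_eq_intCast_iff _ _ _).mp hjk).symm.dvd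
    obtain ⟨c, hc⟩ := hdvd
    have hterm : ∀ i : Fin N, Complex.exp (2 * Real.pi * Complex.I *
        (((a j : ℤ) : ℂ) - ((a k : ℤ) : ℂ)) * ((l i : ℝ) : ℂ)) = 1 := by
      intro i
      obtain ⟨n, hn⟩ := hint i
      rw [Complex.exp_eq_one_iff]
      refine ⟨c * n, ?_⟩
      have h1 : ((a j : ℤ) : ℂ) - ((a k : ℤ) : ℂ) = (N : ℂ) * (c : ℂ) := by
        exact_mod_cast congrArg (Int.cast : ℤ → ℂ) hc
      have h2 : ((l i : ℝ) : ℂ) * (N : ℂ) = (n : ℂ) := by exact_mod_cast hn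
      push_cast
      linear_combination (2 * (Real.pi : ℂ) * Complex.I * (c : ℂ)) * h2 +
        (2 * (Real.pi : ℂ) * Complex.I * ((l i : ℝ) : ℂ)) * h1
    have hsum := h3 j k
    rw [if_neg hne, Finset.sum_congr rfl fun i _ => hterm i] at hsum
    simp at hsum
    omega
  have hbij : Function.Bijective (fun k : Fin N => ((a k : ℤ) : ZMod N)) := by
    rw [Fintype.bijective_iff_injective_and_card]
    exact ⟨fun j k hjk => hinj j k hjk, by simp [ZMod.card]⟩
  constructor
  · intro x
    obtain ⟨k, hk, huniq⟩ := hbij.existsUnique ((x : ℤ) : ZMod N)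
    have hdvd : (N : ℤ) ∣ x - a k := by
      have : ((x : ℤ) : ZMod N) = ((a k : ℤ) : ZMod N) := hk.symm
      exact (dvd_sub_comm.mp ((ZMod.intCast_eq_intCast_iff _ _ _).mp this).dvd)
    obtain ⟨m, hm⟩ := hdvd
    refine ⟨(k, m), by simp; linarith, ?_⟩
    rintro ⟨k', m'⟩ hp
    simp only at hp
    have hk' : ((a k' : ℤ) : ZMod N) = ((x : ℤ) : ZMod N) := by
      rw [hp]; push_cast [ZMod.natCast_self]; ring
    have hkk : k' = k := huniq k' hk'
    subst hkk
    have : (N : ℤ) * m' = (N : ℤ) * m := by omega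
    have hm' : m' = m := by
      have hNZ : (N : ℤ) ≠ 0 := Int.natCast_ne_zero.mpr hN.ne'
      exact mul_left_cancel₀ hNZ this
    simp [hm']
  · intro z
    exact hbij.existsUnique z
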